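/- Let L be a finite group, p a prime, and Z a subgroup of the center of L that is a p-group. Let g ∈ L be such that the index of the centralizer of g in L is not divisible by p. Then the only L-conjugate of g lying in the coset gZ is g itself; equivalently, for all u ∈ L and z ∈ Z, if u * g * u⁻¹ = g * z then z = 1. -/

import Mathlib

/-- If `Z` is a central `p`-subgroup of a finite group `L` and `g ∈ L` has centralizer of
index prime to `p`, then the only `L`-conjugate of `g` in the coset `gZ` is `g` itself. -/
theorem conj_in_central_coset_eq
    (p : ℕ) (hp : p.Prime)
    (L : Type*) [Group L] [Finite L]
    (Z : Subgroup L) (hZc : Z ≤ Subgroup.center L) (hZp : IsPGroup p Z)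
    (g : L) (hind : ¬ p ∣ (Subgroup.centralizer {g}).index) :
    ∀ u z : L, z ∈ Z → u * g * u⁻¹ = g * z → z = 1 := by
  haveI : Fact p.Prime := ⟨hp⟩
  intro u z hz hugu
  have hcomm : ∀ w ∈ Z, ∀ x : L, x * w = w * x :=
    fun w hw x => Subgroup.mem_center_iff.mp (hZc hw) x
  -- key multiplicativity computation
  have key : ∀ a b : L, (g⁻¹ * (b * g * b⁻¹)) ∈ Z →
      g⁻¹ * (a * b * g * (a * b)⁻¹) =
        (g⁻¹ * (a * g * a⁻¹)) * (g⁻¹ * (b * g * b⁻¹)) := by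
    intro a b hb
    set zb := g⁻¹ * (b * g * b⁻¹) with hzb
    have h1 : b * g * b⁻¹ = g * zb := by rw [hzb]; group
    have h2 : a * b * g * (a * b)⁻¹ = a * (b * g * b⁻¹) * a⁻¹ := by group
    rw [h2, h1, show a * (g * zb) * a⁻¹ = a * g * (zb * a⁻¹) by group,
      ← hcomm zb hb a⁻¹]
    group
  have keyinv : ∀ a : L, (g⁻¹ * (a * g * a⁻¹)) ∈ Z →
      g⁻¹ * (a⁻¹ * g * a⁻¹⁻¹) = (g⁻¹ * (a * g * a⁻¹))⁻¹ := by
    intro a ha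
    set za := g⁻¹ * (a * g * a⁻¹) with hza
    have hza' : za * a = a * za := (hcomm za ha a).symm
    have h1 : g = a⁻¹ * g * (a * za) := by
      rw [← hza', show a⁻¹ * g * (za * a) = a⁻¹ * (g * za) * a by group,
        show g * za = a * g * a⁻¹ from by rw [hza]; group]
      group
    have h3 : a⁻¹ * g * a = g * za⁻¹ := by
      conv_rhs => rw [h1]
      group
    rw [inv_inv, h3]
    group
  let H : Subgroup L :=
    { carrier := {a | g⁻¹ * (a * g * a⁻¹) ∈ Z}
      one_mem' := by simpa using Z.one_mem
      mul_mem' := fun {a b} ha hb => by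
        simp only [Set.mem_setOf_eq] at *
        rw [key a b hb]; exact Z.mul_mem ha hb
      inv_mem' := fun {a} ha => by
        simp only [Set.mem_setOf_eq] at *
        rw [keyinv a ha]; exact Z.inv_mem ha }
  have hmemH : ∀ a : L, a ∈ H ↔ g⁻¹ * (a * g * a⁻¹) ∈ Z := fun a => Iff.rfl
  -- the homomorphism
  let φ : H →* Z :=
    { toFun := fun a => ⟨g⁻¹ * (a * g * (a : L)⁻¹), a.2⟩
      map_one' := Subtype.ext (by simp)
      map_mul' := fun a b => Subtype.ext (key a b b.2) }
  -- centralizer ≤ H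
  have hCg : ∀ a : L, a ∈ Subgroup.centralizer {g} ↔ a * g = g * a := by
    intro a
    exact Subgroup.mem_centralizer_singleton_iff
  have hCH : Subgroup.centralizer {g} ≤ H := by
    intro a ha
    rw [hmemH]
    have h : a * g = g * a := (hCg a).mp ha
    have h1 : g⁻¹ * (a * g * a⁻¹) = 1 := by rw [h]; group
    rw [h1]; exact Z.one_mem
  -- kernel of φ
  have hker : φ.ker = (Subgroup.centralizer {g}).subgroupOf H := by
    ext a
    rw [MonoidHom.mem_ker, Subgroup.mem_subgroupOf, hCg]
    constructor
    · intro h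
      have h' : g⁻¹ * ((a:L) * g * (a:L)⁻¹) = 1 := congrArg Subtype.val h
      have h2 : (a:L) * g * (a:L)⁻¹ = g := by
        rw [show (a:L) * g * (a:L)⁻¹ = g * (g⁻¹ * ((a:L) * g * (a:L)⁻¹)) by group, h', mul_one]
      calc (a:L) * g = (a:L) * g * (a:L)⁻¹ * a := by group
        _ = g * a := by rw [h2]
    · intro h
      refine Subtype.ext ?_
      show g⁻¹ * ((a:L) * g * (a:L)⁻¹) = 1
      rw [show (a:L) * g = g * a from h]; group
  -- counting
  have hdvd : Nat.card φ.range ∣ (Subgroup.centralizer {g}).index := by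
    rw [← Subgroup.index_ker, hker]
    exact Subgroup.relIndex_dvd_index_of_le hCH
  obtain ⟨n, hn⟩ := (hZp.to_subgroup φ.range).exists_card_eq
  have hn0 : n = 0 := by
    by_contra hne
    exact hind (dvd_trans (dvd_trans (dvd_pow_self p hne) (hn ▸ dvd_refl _)) hdvd)
  have hbot : φ.range = ⊥ := Subgroup.card_eq_one.mp (by rw [hn, hn0, pow_zero])
  have huH : u ∈ H := by
    rw [hmemH, show g⁻¹ * (u * g * u⁻¹) = z by rw [hugu]; group]
    exact hz
  have hmem : φ ⟨u, huH⟩ ∈ φ.range := ⟨⟨u, huH⟩, rfl⟩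
  rw [hbot, Subgroup.mem_bot] at hmem
  have hval : (φ ⟨u, huH⟩ : L) = z := by
    show g⁻¹ * (u * g * u⁻¹) = z
    rw [hugu]; group
  rw [← hval, hmem]
  rfl
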